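/- arXiv:2506.10492 — 2 statements merged into one kernel-verified Lean document; each statement's English description precedes it below -/
import Mathlib

section
/- Let (G,σ,w) be a positive-connected signed graph with consensus index ε₀, and let 0 < ε < ε₀. Then the ε-repelling matrix Ω_ε, with entries Ω_ε(i,j) = (e_i−e_j)ᵀL_ε†(e_i−e_j), is an invertible matrix. -/
open Matrix BigOperators

open scoped Classical

/-- Moore–Penrose pseudoinverse of a square real matrix (chosen via the
defining Penrose equations; it is unique when it exists). -/
noncomputable def pinv {n : ℕ} (A : Matrix (Fin n) (Fin n) ℝ) : Matrix (Fin n) (Fin n) ℝ :=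
  if h : ∃ B : Matrix (Fin n) (Fin n) ℝ,
      A * B * A = A ∧ B * A * B = B ∧ (A * B)ᵀ = A * B ∧ (B * A)ᵀ = B * A
  then h.choose else 0

/-- The eigenvalues of a symmetric real matrix, sorted in nondecreasing order. -/
noncomputable def sortedEigs {n : ℕ} (A : Matrix (Fin n) (Fin n) ℝ) : List ℝ :=
  if h : A.IsHermitian then (Finset.univ.val.map h.eigenvalues).sort (· ≤ ·) else []

/-- The second smallest eigenvalue (with multiplicity) of a symmetric real matrix. -/
noncomputable def secondSmallestEig {n : ℕ} (A : Matrix (Fin n) (Fin n) ℝ) : ℝ :=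
  (sortedEigs A).getD 1 0

/-- The largest eigenvalue of a symmetric real matrix. -/
noncomputable def largestEig {n : ℕ} (A : Matrix (Fin n) (Fin n) ℝ) : ℝ :=
  (sortedEigs A).getD (n - 1) 0

/-- A signed weighted graph on `n` vertices, given by the positive-part and
negative-part weight functions (an edge carries a positive weight and a sign;
`wplus i j > 0` iff `(i,j)` is a positive edge, `wminus i j > 0` iff it is a
negative edge). -/
structure SignedGraph (n : ℕ) where
  wplus : Fin n → Fin n → ℝ
  wminus : Fin n → Fin n → ℝ
  wplus_symm : ∀ i j, wplus i j = wplus j i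
  wminus_symm : ∀ i j, wminus i j = wminus j i
  wplus_nonneg : ∀ i j, 0 ≤ wplus i j
  wminus_nonneg : ∀ i j, 0 ≤ wminus i j
  wplus_diag : ∀ i, wplus i i = 0
  wminus_diag : ∀ i, wminus i i = 0
  disjoint : ∀ i j, wplus i j = 0 ∨ wminus i j = 0

namespace SignedGraph

variable {n : ℕ} (Γ : SignedGraph n)

/-- positive degree -/
noncomputable def dplus (i : Fin n) : ℝ := ∑ j, Γ.wplus i j

/-- negative degree -/
noncomputable def dminus (i : Fin n) : ℝ := ∑ j, Γ.wminus i j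

/-- Laplacian of the positive subgraph -/
noncomputable def Lplus : Matrix (Fin n) (Fin n) ℝ :=
  Matrix.of fun i j => if i = j then Γ.dplus i else -Γ.wplus i j

/-- Laplacian of the negative subgraph -/
noncomputable def Lminus : Matrix (Fin n) (Fin n) ℝ :=
  Matrix.of fun i j => if i = j then Γ.dminus i else -Γ.wminus i j

/-- the ε-repelling Laplacian `L₊ - ε L₋` -/
noncomputable def Leps (ε : ℝ) : Matrix (Fin n) (Fin n) ℝ := Γ.Lplus - ε • Γ.Lminus

/-- the positive subgraph as a simple graph -/
def posGraph : SimpleGraph (Fin n) := SimpleGraph.fromRel (fun i j => 0 < Γ.wplus i j)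

/-- the negative subgraph as a simple graph -/
def negGraph : SimpleGraph (Fin n) := SimpleGraph.fromRel (fun i j => 0 < Γ.wminus i j)

/-- the underlying simple graph -/
def underlying : SimpleGraph (Fin n) :=
  SimpleGraph.fromRel (fun i j => 0 < Γ.wplus i j + Γ.wminus i j)

/-- the signed graph is positive-connected -/
def PosConnected : Prop := Γ.posGraph.Connected

/-- the signed graph is negative-connected -/
def NegConnected : Prop := Γ.negGraph.Connected

/-- the consensus index ε₀ -/
noncomputable def consensusIndex : ℝ :=
  sSup {ε : ℝ | 0 < ε ∧ (Γ.Leps ε).PosSemidef ∧ (Γ.Leps ε).rank = n - 1}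

/-- the ε-repelling cost Ω_ε(i,j) = (e_i - e_j)ᵀ L_ε† (e_i - e_j) -/
noncomputable def cost (ε : ℝ) (i j : Fin n) : ℝ :=
  (Pi.single i 1 - Pi.single j 1) ⬝ᵥ (pinv (Γ.Leps ε)) *ᵥ (Pi.single i 1 - Pi.single j 1)

/-- the ε-repelling matrix Ω_ε -/
noncomputable def costMatrix (ε : ℝ) : Matrix (Fin n) (Fin n) ℝ :=
  Matrix.of fun i j => Γ.cost ε i j

/-- the node ε-repelling curvature, the unique solution of Ω_ε τ_ε = n·1 -/
noncomputable def tau (ε : ℝ) : Fin n → ℝ :=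
  (Γ.costMatrix ε)⁻¹ *ᵥ (fun _ => (n : ℝ))

/-- φ_ε = n · 1ᵀ Ω_ε⁻¹ 1 -/
noncomputable def phi (ε : ℝ) : ℝ :=
  (n : ℝ) * ((fun _ => (1 : ℝ)) ⬝ᵥ ((Γ.costMatrix ε)⁻¹ *ᵥ fun _ => (1 : ℝ)))

/-- the quantity Λ_ε(i,j) appearing in the edge ε-repelling curvature -/
noncomputable def Lam (ε : ℝ) (i j : Fin n) : ℝ :=
  (Γ.dminus i + Γ.dminus j)
    - (∑ k, Γ.cost ε j k * Γ.wminus i k + ∑ k, Γ.cost ε i k * Γ.wminus j k) / Γ.cost ε i j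

/-- the edge ε-repelling curvature ϑ_ε(i,j) -/
noncomputable def edgeCurv (ε : ℝ) (i j : Fin n) : ℝ :=
  2 * (Γ.tau ε i + Γ.tau ε j) / Γ.cost ε i j + (1 + ε) * Γ.Lam ε i j

end SignedGraph


/-! ### Auxiliary lemmas for the proof of `stmt11` -/

section AuxLap
variable {n : ℕ}

lemma lapMat_eq (w : Fin n → Fin n → ℝ) (i j : Fin n) :
    (if i = j then (∑ k, w i k) else - w i j)
      = (if i = j then (∑ k, w i k) + w i j else 0) - w i j := by
  by_cases h : i = j <;> simp [h]

lemma lap_inner (w : Fin n → Fin n → ℝ) (hd : ∀ i, w i i = 0) (x : Fin n → ℝ) (i : Fin n) :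
    (∑ j, (if i = j then (∑ k, w i k) else - w i j) * x j)
      = (∑ k, w i k) * x i - ∑ j, w i j * x j := by
  rw [Finset.sum_congr rfl (fun j _ => by rw [lapMat_eq w i j, sub_mul]),
    Finset.sum_sub_distrib]
  congr 1
  simp only [ite_mul, zero_mul]
  rw [Finset.sum_ite_eq Finset.univ i]
  simp [hd i]

lemma lap_mulVec_one (w : Fin n → Fin n → ℝ) (hd : ∀ i, w i i = 0) :
    (Matrix.of fun i j => if i = j then (∑ k, w i k) else - w i j) *ᵥ (fun _ => (1:ℝ)) = 0 := by
  funext i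
  simp only [Matrix.mulVec, dotProduct, Matrix.of_apply]
  rw [lap_inner w hd _ i]
  simp

lemma lap_transpose (w : Fin n → Fin n → ℝ) (hs : ∀ i j, w i j = w j i) :
    (Matrix.of fun i j => if i = j then (∑ k, w i k) else - w i j)ᵀ
      = (Matrix.of fun i j => if i = j then (∑ k, w i k) else - w i j) := by
  ext i j
  simp only [Matrix.transpose_apply, Matrix.of_apply]
  by_cases h : i = j
  · subst h; simp
  · rw [if_neg h, if_neg (Ne.symm h), hs]

lemma lap_quadform (w : Fin n → Fin n → ℝ) (hs : ∀ i j, w i j = w j i) (hd : ∀ i, w i i = 0)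
    (x : Fin n → ℝ) :
    x ⬝ᵥ (Matrix.of fun i j => if i = j then (∑ k, w i k) else - w i j) *ᵥ x
      = (1/2) * ∑ i, ∑ j, w i j * (x i - x j)^2 := by
  have key : ∑ i, ∑ j, w i j * (x j)^2 = ∑ i, ∑ j, w i j * (x i)^2 := by
    rw [Finset.sum_comm]
    exact Finset.sum_congr rfl fun i _ => Finset.sum_congr rfl fun j _ => by rw [hs]
  have lhs : x ⬝ᵥ (Matrix.of fun i j => if i = j then (∑ k, w i k) else - w i j) *ᵥ x
      = (∑ i, ∑ j, w i j * (x i)^2) - ∑ i, ∑ j, w i j * (x i * x j) := by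
    simp only [Matrix.mulVec, dotProduct, Matrix.of_apply]
    rw [Finset.sum_congr rfl (fun i _ => by rw [lap_inner w hd x i]), Finset.sum_congr rfl
      (fun i _ => mul_sub (x i) _ _), Finset.sum_sub_distrib]
    congr 1
    · refine Finset.sum_congr rfl fun i _ => ?_
      rw [Finset.sum_mul, Finset.mul_sum]
      exact Finset.sum_congr rfl fun j _ => by ring
    · refine Finset.sum_congr rfl fun i _ => ?_
      rw [Finset.mul_sum]
      exact Finset.sum_congr rfl fun j _ => by ring
  have rhs : ∑ i, ∑ j, w i j * (x i - x j)^2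
      = (∑ i, ∑ j, w i j * (x i)^2) + (∑ i, ∑ j, w i j * (x j)^2)
        - 2 * ∑ i, ∑ j, w i j * (x i * x j) := by
    rw [Finset.mul_sum]
    rw [Finset.sum_congr rfl (fun i (_ : i ∈ Finset.univ) => Finset.mul_sum _ _ _)]
    simp only [← Finset.sum_add_distrib, ← Finset.sum_sub_distrib]
    exact Finset.sum_congr rfl fun i _ => Finset.sum_congr rfl fun j _ => by ring
  rw [lhs, rhs, key]
  ring

lemma const_of_adj {G : SimpleGraph (Fin n)} (hG : G.Connected) (x : Fin n → ℝ)
    (h : ∀ i j, G.Adj i j → x i = x j) (i j : Fin n) : x i = x j := by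
  obtain ⟨p⟩ := hG.preconnected i j
  induction p with
  | nil => rfl
  | cons h' p ih => exact (h _ _ h').trans ih

end AuxLap

lemma penrose_unique {n : ℕ} {A B C : Matrix (Fin n) (Fin n) ℝ}
    (hB1 : A*B*A = A) (hB2 : B*A*B = B) (hB3 : (A*B)ᵀ = A*B) (hB4 : (B*A)ᵀ = B*A)
    (hC1 : A*C*A = A) (hC2 : C*A*C = C) (hC3 : (A*C)ᵀ = A*C) (hC4 : (C*A)ᵀ = C*A) :
    B = C := by
  have hAB : A*B = A*C := by
    calc A*B = (A*B)ᵀ := hB3.symm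
    _ = Bᵀ*Aᵀ := Matrix.transpose_mul _ _
    _ = Bᵀ*(A*C*A)ᵀ := by rw [hC1]
    _ = Bᵀ*(Aᵀ*(A*C)ᵀ) := by rw [Matrix.transpose_mul]
    _ = (Bᵀ*Aᵀ)*(A*C) := by rw [hC3, Matrix.mul_assoc]
    _ = (A*B)ᵀ*(A*C) := by rw [Matrix.transpose_mul]
    _ = (A*B)*(A*C) := by rw [hB3]
    _ = (A*B*A)*C := by simp only [Matrix.mul_assoc]
    _ = A*C := by rw [hB1]
  have hBA : B*A = C*A := by
    calc B*A = (B*A)ᵀ := hB4.symm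
    _ = Aᵀ*Bᵀ := Matrix.transpose_mul _ _
    _ = (A*C*A)ᵀ*Bᵀ := by rw [hC1]
    _ = ((C*A)ᵀ*Aᵀ)*Bᵀ := by simp only [Matrix.transpose_mul, Matrix.mul_assoc]
    _ = (C*A)*(Aᵀ*Bᵀ) := by rw [hC4, Matrix.mul_assoc]
    _ = (C*A)*(B*A)ᵀ := by rw [Matrix.transpose_mul]
    _ = (C*A)*(B*A) := by rw [hB4]
    _ = C*(A*B*A) := by simp only [Matrix.mul_assoc]
    _ = C*A := by rw [hB1]
  calc B = B*A*B := hB2.symm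
  _ = C*A*B := by rw [hBA]
  _ = C*(A*B) := Matrix.mul_assoc _ _ _
  _ = C*(A*C) := by rw [hAB]
  _ = C*A*C := (Matrix.mul_assoc _ _ _).symm
  _ = C := hC2

lemma key_invert {n : ℕ} (hn : 2 ≤ n) (L : Matrix (Fin n) (Fin n) ℝ)
    (hsym : Lᵀ = L)
    (hL1 : L *ᵥ (fun _ => (1:ℝ)) = 0)
    (hpsd : ∀ x : Fin n → ℝ, 0 ≤ x ⬝ᵥ L *ᵥ x)
    (hker : ∀ x : Fin n → ℝ, x ⬝ᵥ L *ᵥ x = 0 → ∀ i j, x i = x j) :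
    IsUnit (Matrix.of fun i j : Fin n =>
      ((Pi.single i 1 - Pi.single j 1) ⬝ᵥ (pinv L) *ᵥ (Pi.single i 1 - Pi.single j 1) : ℝ)) := by
  have hnR : (0:ℝ) < n := by
    have : (2:ℝ) ≤ n := by exact_mod_cast hn
    linarith
  have hne : (n:ℝ) ≠ 0 := ne_of_gt hnR
  set u : Fin n → ℝ := fun _ => 1 with hu
  set J : Matrix (Fin n) (Fin n) ℝ := Matrix.of (fun _ _ => (1:ℝ)) with hJ
  have hJT : Jᵀ = J := rfl
  have hJvec : ∀ x : Fin n → ℝ, J *ᵥ x = (∑ j, x j) • u := by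
    intro x; funext i; simp [hJ, hu, Matrix.mulVec, dotProduct]
  have hJu : J *ᵥ u = (n:ℝ) • u := by
    rw [hJvec]; simp [hu]
  have hLJ : L * J = 0 := by
    ext i j
    simp only [Matrix.mul_apply, hJ, Matrix.of_apply, mul_one, Matrix.zero_apply]
    have := congrFun hL1 i
    simpa [Matrix.mulVec, dotProduct, hu] using this
  have hJL : J * L = 0 := by
    have : J * L = (Lᵀ * Jᵀ)ᵀ := by
      rw [Matrix.transpose_mul, Matrix.transpose_transpose, Matrix.transpose_transpose]
    rw [this, hsym, hJT, hLJ, Matrix.transpose_zero]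
  have hJJ : J * J = (n:ℝ) • J := by
    ext i j
    simp [hJ, Matrix.mul_apply, Matrix.smul_apply]
  set K : Matrix (Fin n) (Fin n) ℝ := L + (n:ℝ)⁻¹ • J with hK
  have hKsym : Kᵀ = K := by
    rw [hK, Matrix.transpose_add, Matrix.transpose_smul, hsym, hJT]
  have hKu : K *ᵥ u = u := by
    rw [hK, Matrix.add_mulVec, Matrix.smul_mulVec, hL1, hJu, smul_smul,
      inv_mul_cancel₀ hne]
    simp
  have hquadJ : ∀ x : Fin n → ℝ, x ⬝ᵥ J *ᵥ x = (∑ j, x j)^2 := by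
    intro x
    rw [hJvec, dotProduct_smul]
    simp [hu, dotProduct, sq]
  have hKquad : ∀ x : Fin n → ℝ, x ⬝ᵥ K *ᵥ x = x ⬝ᵥ L *ᵥ x + (n:ℝ)⁻¹ * (∑ j, x j)^2 := by
    intro x
    rw [hK, Matrix.add_mulVec, dotProduct_add, Matrix.smul_mulVec,
      dotProduct_smul, hquadJ x, smul_eq_mul]
  have hKpos : ∀ x : Fin n → ℝ, 0 ≤ x ⬝ᵥ K *ᵥ x := by
    intro x
    rw [hKquad x]
    have := hpsd x
    have h2 : (0:ℝ) ≤ (n:ℝ)⁻¹ * (∑ j, x j)^2 := by positivity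
    linarith
  have hKdef : ∀ x : Fin n → ℝ, x ⬝ᵥ K *ᵥ x = 0 → x = 0 := by
    intro x hx
    rw [hKquad x] at hx
    have h1 := hpsd x
    have h2 : (0:ℝ) ≤ (n:ℝ)⁻¹ * (∑ j, x j)^2 := by positivity
    have hq : x ⬝ᵥ L *ᵥ x = 0 := by linarith
    have hsz : ∑ j, x j = 0 := by
      have : (n:ℝ)⁻¹ * (∑ j, x j)^2 = 0 := by linarith
      have h3 : (∑ j, x j)^2 = 0 := by
        rcases mul_eq_zero.mp this with h | h
        · exact absurd h (inv_ne_zero hne)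
        · exact h
      exact pow_eq_zero_iff (by norm_num) |>.mp h3
    have hconst := hker x hq
    funext i
    have : ∑ j, x j = (n:ℝ) * x i := by
      rw [Finset.sum_congr rfl (fun j _ => hconst j i)]
      simp [Finset.card_univ, mul_comm]
    rw [hsz] at this
    rcases mul_eq_zero.mp this.symm with h | h
    · exact absurd h hne
    · simpa using h
  have hKdet : IsUnit K.det := by
    rw [isUnit_iff_ne_zero]
    intro hdet
    obtain ⟨v, hv0, hv⟩ := Matrix.exists_mulVec_eq_zero_iff.mpr hdet
    have : v ⬝ᵥ K *ᵥ v = 0 := by rw [hv]; simp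
    exact hv0 (hKdef v this)
  have hKK : K * K⁻¹ = 1 := Matrix.mul_nonsing_inv K hKdet
  have hKK' : K⁻¹ * K = 1 := Matrix.nonsing_inv_mul K hKdet
  have hJK : J * K = J := by
    rw [hK, Matrix.mul_add, Matrix.mul_smul, hJL, hJJ, smul_smul, inv_mul_cancel₀ hne]
    simp
  have hJKi : J * K⁻¹ = J := by
    calc J * K⁻¹ = (J * K) * K⁻¹ := by rw [hJK]
    _ = J * (K * K⁻¹) := Matrix.mul_assoc _ _ _
    _ = J := by rw [hKK, Matrix.mul_one]
  have hKiJ : K⁻¹ * J = J := by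
    calc K⁻¹ * J = K⁻¹ * (K * J) := by
          rw [hK, Matrix.add_mul, Matrix.smul_mul, hLJ, hJJ, smul_smul, inv_mul_cancel₀ hne]
          simp
    _ = (K⁻¹ * K) * J := (Matrix.mul_assoc _ _ _).symm
    _ = J := by rw [hKK', Matrix.one_mul]
  set B : Matrix (Fin n) (Fin n) ℝ := K⁻¹ - (n:ℝ)⁻¹ • J with hBdef
  have hLK : L = K - (n:ℝ)⁻¹ • J := by rw [hK, add_sub_cancel_right]
  have hLKi : L * K⁻¹ = 1 - (n:ℝ)⁻¹ • J := by
    rw [hLK, Matrix.sub_mul, Matrix.smul_mul, hJKi, hKK]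
  have hKiL : K⁻¹ * L = 1 - (n:ℝ)⁻¹ • J := by
    rw [hLK, Matrix.mul_sub, Matrix.mul_smul, hKiJ, hKK']
  have hLB : L * B = 1 - (n:ℝ)⁻¹ • J := by
    rw [hBdef, Matrix.mul_sub, Matrix.mul_smul, hLJ, hLKi]
    simp
  have hBL : B * L = 1 - (n:ℝ)⁻¹ • J := by
    rw [hBdef, Matrix.sub_mul, Matrix.smul_mul, hJL, hKiL]
    simp
  have hBJ : B * J = 0 := by
    rw [hBdef, Matrix.sub_mul, Matrix.smul_mul, hKiJ, hJJ, smul_smul, inv_mul_cancel₀ hne]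
    simp
  have hJB : J * B = 0 := by
    rw [hBdef, Matrix.mul_sub, Matrix.mul_smul, hJKi, hJJ, smul_smul, inv_mul_cancel₀ hne]
    simp
  have e1 : L * B * L = L := by
    rw [hLB, Matrix.sub_mul, Matrix.one_mul, Matrix.smul_mul, hJL]
    simp
  have e2 : B * L * B = B := by
    rw [hBL, Matrix.sub_mul, Matrix.one_mul, Matrix.smul_mul, hJB]
    simp
  have e3 : (L * B)ᵀ = L * B := by
    rw [hLB, Matrix.transpose_sub, Matrix.transpose_one, Matrix.transpose_smul, hJT]
  have e4 : (B * L)ᵀ = B * L := by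
    rw [hBL, Matrix.transpose_sub, Matrix.transpose_one, Matrix.transpose_smul, hJT]
  have hex : ∃ C : Matrix (Fin n) (Fin n) ℝ,
      L * C * L = L ∧ C * L * C = C ∧ (L * C)ᵀ = L * C ∧ (C * L)ᵀ = C * L :=
    ⟨B, e1, e2, e3, e4⟩
  have hMB : pinv L = B := by
    have hspec := hex.choose_spec
    rw [pinv, dif_pos hex]
    exact penrose_unique hspec.1 hspec.2.1 hspec.2.2.1 hspec.2.2.2 e1 e2 e3 e4
  -- symmetry of B
  have hBsym : Bᵀ = B := by
    rw [hBdef, Matrix.transpose_sub, Matrix.transpose_smul, hJT, Matrix.transpose_nonsing_inv,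
      hKsym]
  have hBji : ∀ i j, B j i = B i j := by
    intro i j
    have := congrFun (congrFun hBsym i) j
    simpa [Matrix.transpose_apply] using this
  -- B annihilates constants
  have hKiu : K⁻¹ *ᵥ u = u := by
    calc K⁻¹ *ᵥ u = K⁻¹ *ᵥ (K *ᵥ u) := by rw [hKu]
    _ = (K⁻¹ * K) *ᵥ u := Matrix.mulVec_mulVec _ _ _
    _ = u := by rw [hKK', Matrix.one_mulVec]
  have hBu : B *ᵥ u = 0 := by
    rw [hBdef, Matrix.sub_mulVec, Matrix.smul_mulVec, hKiu, hJu, smul_smul,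
      inv_mul_cancel₀ hne]
    simp
  have huB : ∀ x : Fin n → ℝ, u ⬝ᵥ (B *ᵥ x) = 0 := by
    intro x
    rw [Matrix.dotProduct_mulVec]
    have : u ᵥ* B = 0 := by
      rw [← hBsym, Matrix.vecMul_transpose, hBu]
    rw [this]
    simp
  -- quadratic form of B
  have hBK : B * K = 1 - (n:ℝ)⁻¹ • J := by
    rw [hK, Matrix.mul_add, Matrix.mul_smul, hBJ, hBL]
    simp
  have hBKB : B * K * B = B := by
    rw [hBK, Matrix.sub_mul, Matrix.one_mul, Matrix.smul_mul, hJB]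
    simp
  have hquadB : ∀ x : Fin n → ℝ, x ⬝ᵥ B *ᵥ x = (B *ᵥ x) ⬝ᵥ K *ᵥ (B *ᵥ x) := by
    intro x
    calc x ⬝ᵥ B *ᵥ x = x ⬝ᵥ (B * K * B) *ᵥ x := by rw [hBKB]
    _ = x ⬝ᵥ (Bᵀ * (K * B)) *ᵥ x := by rw [hBsym, Matrix.mul_assoc]
    _ = x ⬝ᵥ Bᵀ *ᵥ ((K * B) *ᵥ x) := by rw [Matrix.mulVec_mulVec]
    _ = (x ᵥ* Bᵀ) ⬝ᵥ ((K * B) *ᵥ x) := Matrix.dotProduct_mulVec _ _ _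
    _ = (B *ᵥ x) ⬝ᵥ K *ᵥ (B *ᵥ x) := by rw [Matrix.vecMul_transpose, ← Matrix.mulVec_mulVec]
  have hBpos : ∀ x : Fin n → ℝ, 0 ≤ x ⬝ᵥ B *ᵥ x := by
    intro x; rw [hquadB x]; exact hKpos _
  have hBdefker : ∀ x : Fin n → ℝ, x ⬝ᵥ B *ᵥ x = 0 → B *ᵥ x = 0 := by
    intro x hx
    rw [hquadB x] at hx
    exact hKdef _ hx
  have hkerB : ∀ x : Fin n → ℝ, B *ᵥ x = 0 → ∀ i, x i = (n:ℝ)⁻¹ * ∑ j, x j := by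
    intro x hx i
    have h1 : K⁻¹ *ᵥ x = ((n:ℝ)⁻¹ * ∑ j, x j) • u := by
      have : K⁻¹ *ᵥ x - (n:ℝ)⁻¹ • (J *ᵥ x) = 0 := by
        rw [← Matrix.smul_mulVec, ← Matrix.sub_mulVec, ← hBdef, hx]
      have h2 := sub_eq_zero.mp this
      rw [h2, hJvec, smul_smul]
    have h3 : x = ((n:ℝ)⁻¹ * ∑ j, x j) • u := by
      calc x = (K * K⁻¹) *ᵥ x := by rw [hKK, Matrix.one_mulVec]
      _ = K *ᵥ (K⁻¹ *ᵥ x) := (Matrix.mulVec_mulVec _ _ _).symm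
      _ = K *ᵥ (((n:ℝ)⁻¹ * ∑ j, x j) • u) := by rw [h1]
      _ = ((n:ℝ)⁻¹ * ∑ j, x j) • (K *ᵥ u) := Matrix.mulVec_smul _ _ _
      _ = ((n:ℝ)⁻¹ * ∑ j, x j) • u := by rw [hKu]
    have := congrFun h3 i
    simpa [hu] using this
  -- diagonal entries and trace
  have hdiag : ∀ i, B i i = (Pi.single i 1) ⬝ᵥ B *ᵥ (Pi.single i (1:ℝ)) := by
    intro i
    rw [Matrix.mulVec_single, single_dotProduct]
    simp
  have hdiag_nonneg : ∀ i, 0 ≤ B i i := by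
    intro i; rw [hdiag i]; exact hBpos _
  have htr : 0 < ∑ i, B i i := by
    rcases lt_or_eq_of_le (Finset.sum_nonneg fun i _ => hdiag_nonneg i) with h | h
    · exact h
    · exfalso
      have hzero : ∀ i, B i i = 0 := by
        have := (Finset.sum_eq_zero_iff_of_nonneg (fun i _ => hdiag_nonneg i)).mp h.symm
        intro i; exact this i (Finset.mem_univ i)
      have hB0 : B = 0 := by
        ext k i
        have hq : (Pi.single i 1) ⬝ᵥ B *ᵥ (Pi.single i (1:ℝ)) = 0 := by
          rw [← hdiag i]; exact hzero i
        have := hBdefker _ hq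
        have hcol := congrFun this k
        rw [Matrix.mulVec_single] at hcol
        simpa using hcol
      have := hBK
      rw [hB0, Matrix.zero_mul] at this
      set i0 : Fin n := ⟨0, by omega⟩
      set i1 : Fin n := ⟨1, by omega⟩
      have hne01 : i0 ≠ i1 := by
        intro h; simpa [i0, i1, Fin.ext_iff] using h
      have := congrFun (congrFun this i0) i1
      rw [Matrix.zero_apply, Matrix.sub_apply, Matrix.one_apply_ne hne01,
        Matrix.smul_apply] at this
      simp only [hJ, Matrix.of_apply, smul_eq_mul, mul_one] at this
      have : (n:ℝ)⁻¹ = 0 := by linarith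
      exact (inv_ne_zero hne) this
  -- the cost matrix entries
  have hOm : ∀ i j : Fin n, (Pi.single i 1 - Pi.single j 1) ⬝ᵥ B *ᵥ (Pi.single i 1 - Pi.single j (1:ℝ))
      = B i i + B j j - 2 * B i j := by
    intro i j
    rw [Matrix.mulVec_sub, sub_dotProduct, dotProduct_sub, dotProduct_sub,
      Matrix.mulVec_single, Matrix.mulVec_single, single_dotProduct,
      single_dotProduct, single_dotProduct, single_dotProduct]
    rw [hBji j i]
    simp only [MulOpposite.op_one, one_smul, Matrix.col_apply, hBji j i]
    ring
  -- final argument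
  rw [hMB, Matrix.isUnit_iff_isUnit_det, isUnit_iff_ne_zero]
  intro hdet
  obtain ⟨x, hx0, hxv⟩ := Matrix.exists_mulVec_eq_zero_iff.mpr hdet
  set s : ℝ := ∑ j, x j with hs
  set t : ℝ := ∑ j, B j j * x j with ht
  have hrow : ∀ k, B k k * s + t - 2 * (B *ᵥ x) k = 0 := by
    intro k
    have hk := congrFun hxv k
    have hexp : (Matrix.of fun i j : Fin n =>
        ((Pi.single i 1 - Pi.single j 1) ⬝ᵥ B *ᵥ (Pi.single i 1 - Pi.single j 1) : ℝ)) *ᵥ x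
        = fun k => B k k * s + t - 2 * (B *ᵥ x) k := by
      funext k'
      show ∑ j, ((Pi.single k' 1 - Pi.single j 1) ⬝ᵥ B *ᵥ (Pi.single k' 1 - Pi.single j 1)) * x j
        = B k' k' * s + t - 2 * (B *ᵥ x) k'
      rw [Finset.sum_congr rfl (fun j _ => by rw [hOm k' j])]
      have step : ∀ j : Fin n, (B k' k' + B j j - 2 * B k' j) * x j
          = B k' k' * x j + B j j * x j - 2 * (B k' j * x j) := fun j => by ring
      rw [Finset.sum_congr rfl (fun j _ => step j)]
      rw [Finset.sum_sub_distrib, Finset.sum_add_distrib, ← Finset.mul_sum, ← Finset.mul_sum,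
        hs, ht]
      rfl
    rw [hexp] at hk
    exact hk
  have hsumBx : ∑ k, (B *ᵥ x) k = 0 := by
    have := huB x
    simpa [hu, dotProduct] using this
  have hsum : (∑ i, B i i) * s + n * t = 0 := by
    have h0 : ∑ k, (B k k * s + t - 2 * (B *ᵥ x) k) = 0 :=
      Finset.sum_eq_zero fun k _ => hrow k
    rw [Finset.sum_sub_distrib, Finset.sum_add_distrib, ← Finset.sum_mul, ← Finset.mul_sum,
      hsumBx, Finset.sum_const, Finset.card_univ, Fintype.card_fin, nsmul_eq_mul] at h0
    linarith
  have hxq : x ⬝ᵥ B *ᵥ x = s * t := by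
    have h0 : ∑ k, x k * (B k k * s + t - 2 * (B *ᵥ x) k) = 0 :=
      Finset.sum_eq_zero fun k _ => by rw [hrow k, mul_zero]
    have hexp : ∑ k, x k * (B k k * s + t - 2 * (B *ᵥ x) k)
        = s * t + s * t - 2 * (x ⬝ᵥ B *ᵥ x) := by
      have step : ∀ k : Fin n, x k * (B k k * s + t - 2 * (B *ᵥ x) k)
          = (B k k * x k) * s + x k * t - 2 * (x k * (B *ᵥ x) k) := fun k => by ring
      rw [Finset.sum_congr rfl (fun k _ => step k)]
      rw [Finset.sum_sub_distrib, Finset.sum_add_distrib, ← Finset.sum_mul, ← Finset.sum_mul,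
        ← Finset.mul_sum, ht, hs]
      simp only [dotProduct]
      ring
    rw [hexp] at h0
    linarith
  have hBxnn := hBpos x
  have hs0 : s = 0 := by
    have h1 : (∑ i, B i i) * s + (n:ℝ) * t = 0 := hsum
    have hst : 0 ≤ s * t := hxq ▸ hBxnn
    have h3 : (∑ i, B i i) * (s * s) + (n:ℝ) * (t * s) = 0 := by
      linear_combination s * h1
    have hss : s * s = 0 := by nlinarith [htr, hnR, hst, mul_self_nonneg s]
    exact mul_self_eq_zero.mp hss
  have ht0 : t = 0 := by
    rw [hs0, mul_zero, zero_add] at hsum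
    exact (mul_eq_zero.mp hsum).resolve_left hne
  have hq0 : x ⬝ᵥ B *ᵥ x = 0 := by rw [hxq, hs0, zero_mul]
  have hBx0 := hBdefker x hq0
  have := hkerB x hBx0
  apply hx0
  funext i
  rw [this i, ← hs, hs0, mul_zero]
  rfl

/-- the ε-repelling matrix Ω_ε is invertible. -/
theorem stmt11 {n : ℕ} (Γ : SignedGraph n) (hpc : Γ.PosConnected)
    (ε : ℝ) (hε0 : 0 < ε) (hε : ε < Γ.consensusIndex) :
    IsUnit (Γ.costMatrix ε) := by
    classical
  set S := {e : ℝ | 0 < e ∧ (Γ.Leps e).PosSemidef ∧ (Γ.Leps e).rank = n - 1} with hS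
  have hcx : ε < sSup S := hε
  have hbdd : S.Nonempty ∧ BddAbove S := by
    by_contra h
    rw [Real.sSup_def, dif_neg h] at hcx
    linarith
  have hn : 2 ≤ n := by
    by_contra h
    push_neg at h
    have hle : n ≤ 1 := by omega
    haveI : Subsingleton (Fin n) := Fin.subsingleton_iff_le_one.mpr hle
    have hzero : ∀ e : ℝ, Γ.Leps e = 0 := by
      intro e
      ext i j
      have hij : i = j := Subsingleton.elim i j
      have hd1 : Γ.dplus i = 0 := by
        rw [SignedGraph.dplus,
          Finset.sum_congr rfl (fun k _ => by rw [Subsingleton.elim k i, Γ.wplus_diag i])]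
        simp
      have hd2 : Γ.dminus i = 0 := by
        rw [SignedGraph.dminus,
          Finset.sum_congr rfl (fun k _ => by rw [Subsingleton.elim k i, Γ.wminus_diag i])]
        simp
      subst hij
      simp [SignedGraph.Leps, SignedGraph.Lplus, SignedGraph.Lminus, hd1, hd2]
    obtain ⟨c, hc⟩ := hbdd.2
    have hmem : max c 0 + 1 ∈ S := by
      rw [hS, Set.mem_setOf_eq]
      refine ⟨by have := le_max_right c 0; linarith, ?_, ?_⟩
      · rw [hzero]; exact Matrix.PosSemidef.zero
      · rw [hzero, Matrix.rank_zero]; omega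
    have h1 := hc hmem
    have h2 := le_max_left c 0
    linarith
  obtain ⟨ε', hε'S, hεε'⟩ := exists_lt_of_lt_csSup hbdd.1 hcx
  rw [hS, Set.mem_setOf_eq] at hε'S
  obtain ⟨hε'pos, hε'psd, -⟩ := hε'S
  have hε'0 : (0:ℝ) < ε' := hε'pos
  have hLplus : Γ.Lplus
      = Matrix.of fun i j => if i = j then (∑ k, Γ.wplus i k) else - Γ.wplus i j := rfl
  have hLminus : Γ.Lminus
      = Matrix.of fun i j => if i = j then (∑ k, Γ.wminus i k) else - Γ.wminus i j := rfl
  -- symmetry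
  have hsym : (Γ.Leps ε)ᵀ = Γ.Leps ε := by
    rw [SignedGraph.Leps, Matrix.transpose_sub, Matrix.transpose_smul, hLplus, hLminus,
      lap_transpose _ Γ.wplus_symm, lap_transpose _ Γ.wminus_symm]
  -- kernel contains constants
  have hL1 : Γ.Leps ε *ᵥ (fun _ => (1:ℝ)) = 0 := by
    rw [SignedGraph.Leps, Matrix.sub_mulVec, Matrix.smul_mulVec, hLplus, hLminus,
      lap_mulVec_one _ Γ.wplus_diag, lap_mulVec_one _ Γ.wminus_diag]
    simp
  -- convex decomposition
  set a : ℝ := 1 - ε / ε' with ha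
  set b : ℝ := ε / ε' with hb
  have hbe : b * ε' = ε := div_mul_cancel₀ ε (ne_of_gt hε'0)
  have hab : a + b = 1 := by rw [ha, hb]; ring
  have ha0 : 0 < a := by
    rw [ha]
    have : ε / ε' < 1 := (div_lt_one hε'0).mpr hεε'
    linarith
  have hb0 : 0 < b := div_pos hε0 hε'0
  have hdecomp : Γ.Leps ε = a • Γ.Lplus + b • Γ.Leps ε' := by
    calc Γ.Leps ε = Γ.Lplus - ε • Γ.Lminus := rfl
    _ = (a + b) • Γ.Lplus - (b * ε') • Γ.Lminus := by rw [hab, hbe, one_smul]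
    _ = a • Γ.Lplus + b • (Γ.Lplus - ε' • Γ.Lminus) := by
        rw [add_smul, smul_sub, smul_smul]; abel
    _ = a • Γ.Lplus + b • Γ.Leps ε' := rfl
  have hquad : ∀ x : Fin n → ℝ, x ⬝ᵥ Γ.Leps ε *ᵥ x
      = a * (x ⬝ᵥ Γ.Lplus *ᵥ x) + b * (x ⬝ᵥ Γ.Leps ε' *ᵥ x) := by
    intro x
    rw [hdecomp, Matrix.add_mulVec, Matrix.smul_mulVec, Matrix.smul_mulVec,
      dotProduct_add, dotProduct_smul, dotProduct_smul, smul_eq_mul,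
      smul_eq_mul]
  have hqplus : ∀ x : Fin n → ℝ, 0 ≤ x ⬝ᵥ Γ.Lplus *ᵥ x := by
    intro x
    rw [hLplus, lap_quadform _ Γ.wplus_symm Γ.wplus_diag]
    have : 0 ≤ ∑ i, ∑ j, Γ.wplus i j * (x i - x j)^2 :=
      Finset.sum_nonneg fun i _ => Finset.sum_nonneg fun j _ =>
        mul_nonneg (Γ.wplus_nonneg i j) (sq_nonneg _)
    linarith
  have hqeps' : ∀ x : Fin n → ℝ, 0 ≤ x ⬝ᵥ Γ.Leps ε' *ᵥ x := by
    intro x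
    have := hε'psd.dotProduct_mulVec_nonneg x
    simpa using this
  have hpsd : ∀ x : Fin n → ℝ, 0 ≤ x ⬝ᵥ Γ.Leps ε *ᵥ x := by
    intro x
    rw [hquad x]
    have h1 := mul_nonneg ha0.le (hqplus x)
    have h2 := mul_nonneg hb0.le (hqeps' x)
    linarith
  have hker : ∀ x : Fin n → ℝ, x ⬝ᵥ Γ.Leps ε *ᵥ x = 0 → ∀ i j, x i = x j := by
    intro x hx
    rw [hquad x] at hx
    have h1 := mul_nonneg ha0.le (hqplus x)
    have h2 := mul_nonneg hb0.le (hqeps' x)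
    have hqp : x ⬝ᵥ Γ.Lplus *ᵥ x = 0 := by
      have : a * (x ⬝ᵥ Γ.Lplus *ᵥ x) = 0 := by linarith
      rcases mul_eq_zero.mp this with h | h
      · exact absurd h (ne_of_gt ha0)
      · exact h
    rw [hLplus, lap_quadform _ Γ.wplus_symm Γ.wplus_diag] at hqp
    have hsum0 : ∑ i, ∑ j, Γ.wplus i j * (x i - x j)^2 = 0 := by linarith
    have hterm : ∀ i j, Γ.wplus i j * (x i - x j)^2 = 0 := by
      intro i j
      have houter := (Finset.sum_eq_zero_iff_of_nonneg (fun i _ =>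
        Finset.sum_nonneg fun j _ =>
          mul_nonneg (Γ.wplus_nonneg i j) (sq_nonneg _))).mp hsum0 i (Finset.mem_univ i)
      exact (Finset.sum_eq_zero_iff_of_nonneg (fun j _ =>
        mul_nonneg (Γ.wplus_nonneg i j) (sq_nonneg _))).mp houter j (Finset.mem_univ j)
    have hadj : ∀ i j, Γ.posGraph.Adj i j → x i = x j := by
      intro i j hij
      rw [SignedGraph.posGraph, SimpleGraph.fromRel_adj] at hij
      obtain ⟨-, h | h⟩ := hij
      · have h0 := hterm i j
        rcases mul_eq_zero.mp h0 with h' | h'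
        · exact absurd h' (ne_of_gt h)
        · exact sub_eq_zero.mp (pow_eq_zero_iff two_ne_zero |>.mp h')
      · have h0 := hterm j i
        rcases mul_eq_zero.mp h0 with h' | h'
        · exact absurd h' (ne_of_gt h)
        · exact (sub_eq_zero.mp (pow_eq_zero_iff two_ne_zero |>.mp h')).symm
    exact const_of_adj hpc x hadj
  exact key_invert hn (Γ.Leps ε) hsym hL1 hpsd hker
end

section
/- Let (G,σ,w) be a positive-connected signed graph on |V(G)| vertices with consensus index ε₀, and let 0 < ε < ε₀. Then ∑_{i,j∈V} (w_ij⁺ − ε·w_ij⁻)·Ω_ε(i,j) = 2(|V(G)| − 1), where the sum is over all ordered pairs of vertices. -/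
open Matrix BigOperators

open scoped Classical

namespace StmtAux


def IsMP {n : ℕ} (A B : Matrix (Fin n) (Fin n) ℝ) : Prop :=
  A * B * A = A ∧ B * A * B = B ∧ (A * B)ᵀ = A * B ∧ (B * A)ᵀ = B * A

lemma IsMP.unique {n : ℕ} {A B₁ B₂ : Matrix (Fin n) (Fin n) ℝ}
    (h1 : IsMP A B₁) (h2 : IsMP A B₂) : B₁ = B₂ := by
  obtain ⟨e1, e2, e3, e4⟩ := h1
  obtain ⟨f1, f2, f3, f4⟩ := h2
  have hAB : A * B₁ = A * B₂ := by
    calc A * B₁ = (A * B₂ * A) * B₁ := by rw [f1]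
    _ = (A * B₂) * (A * B₁) := by rw [Matrix.mul_assoc]
    _ = (A * B₂)ᵀ * (A * B₁)ᵀ := by rw [e3, f3]
    _ = ((A * B₁) * (A * B₂))ᵀ := by simp only [Matrix.transpose_mul, Matrix.mul_assoc]
    _ = ((A * B₁ * A) * B₂)ᵀ := by simp only [Matrix.mul_assoc]
    _ = (A * B₂)ᵀ := by rw [e1]
    _ = A * B₂ := f3
  have hBA : B₁ * A = B₂ * A := by
    calc B₁ * A = B₁ * (A * B₂ * A) := by rw [f1]
    _ = (B₁ * A) * (B₂ * A) := by simp only [Matrix.mul_assoc]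
    _ = (B₁ * A)ᵀ * (B₂ * A)ᵀ := by rw [e4, f4]
    _ = ((B₂ * A) * (B₁ * A))ᵀ := by simp only [Matrix.transpose_mul, Matrix.mul_assoc]
    _ = (B₂ * (A * B₁ * A))ᵀ := by simp only [Matrix.mul_assoc]
    _ = (B₂ * A)ᵀ := by rw [e1]
    _ = B₂ * A := f4
  calc B₁ = B₁ * A * B₁ := e2.symm
  _ = B₁ * (A * B₁) := by rw [Matrix.mul_assoc]
  _ = B₁ * (A * B₂) := by rw [hAB]
  _ = (B₁ * A) * B₂ := by rw [Matrix.mul_assoc]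
  _ = (B₂ * A) * B₂ := by rw [hBA]
  _ = B₂ := f2

lemma pinv_eq {n : ℕ} {A B : Matrix (Fin n) (Fin n) ℝ} (h : IsMP A B) : pinv A = B := by
  have hex : ∃ B : Matrix (Fin n) (Fin n) ℝ,
      A * B * A = A ∧ B * A * B = B ∧ (A * B)ᵀ = A * B ∧ (B * A)ᵀ = B * A := ⟨B, h⟩
  rw [pinv, dif_pos hex]
  exact IsMP.unique hex.choose_spec h



lemma conjT_eq_transpose {n : ℕ} (M : Matrix (Fin n) (Fin n) ℝ) : Mᴴ = Mᵀ := by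
  ext i j; simp [Matrix.conjTranspose_apply]

variable {n : ℕ} {A : Matrix (Fin n) (Fin n) ℝ}

lemma herm_stuff (hA : A.IsHermitian) :
    ∃ B : Matrix (Fin n) (Fin n) ℝ,
      (A * B * A = A ∧ B * A * B = B ∧ (A * B)ᵀ = A * B ∧ (B * A)ᵀ = B * A)
      ∧ Bᵀ = B ∧ (A * B).trace = (A.rank : ℝ) := by
  set U : Matrix (Fin n) (Fin n) ℝ := (hA.eigenvectorUnitary : Matrix (Fin n) (Fin n) ℝ) with hU
  have hU1 : U * star U = 1 := (Matrix.mem_unitaryGroup_iff).mp hA.eigenvectorUnitary.2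
  have hU2 : star U * U = 1 := (Matrix.mem_unitaryGroup_iff').mp hA.eigenvectorUnitary.2
  set μ : Fin n → ℝ := hA.eigenvalues with hμ
  set g : Fin n → ℝ := fun i => if μ i = 0 then 0 else (μ i)⁻¹ with hg
  have hofc : (RCLike.ofReal ∘ hA.eigenvalues : Fin n → ℝ) = μ := by
    funext i; simp [hμ]
  have hspec : A = U * diagonal μ * star U := by
    conv_lhs => rw [hA.spectral_theorem, Unitary.conjStarAlgAut_apply, hofc]
  have key : ∀ f h : Fin n → ℝ,
      (U * diagonal f * star U) * (U * diagonal h * star U)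
        = U * diagonal (fun i => f i * h i) * star U := by
    intro f h
    calc (U * diagonal f * star U) * (U * diagonal h * star U)
        = U * diagonal f * (star U * U) * (diagonal h * star U) := by
          simp only [Matrix.mul_assoc]
      _ = U * (diagonal f * diagonal h) * star U := by
          rw [hU2]; simp only [Matrix.mul_one, Matrix.mul_assoc]
      _ = U * diagonal (fun i => f i * h i) * star U := by
          rw [Matrix.diagonal_mul_diagonal]
  have sym : ∀ f : Fin n → ℝ, (U * diagonal f * star U)ᵀ = U * diagonal f * star U := by
    intro f
    rw [← conjT_eq_transpose]
    simp only [Matrix.conjTranspose_mul]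
    rw [Matrix.star_eq_conjTranspose, Matrix.conjTranspose_conjTranspose,
      Matrix.diagonal_conjTranspose]
    have : star f = f := by funext i; simp
    rw [this, Matrix.mul_assoc]
  set B : Matrix (Fin n) (Fin n) ℝ := U * diagonal g * star U with hB
  have hgμg : (fun i => μ i * g i * g i) = g := by
    funext i
    by_cases h : μ i = 0
    · simp [hg, h]
    · simp only [hg, h, if_false]; field_simp
  have hμgμ : (fun i => μ i * g i * μ i) = μ := by
    funext i
    by_cases h : μ i = 0
    · simp [hg, h]
    · simp only [hg, h, if_false]; field_simp
  have hAB : A * B = U * diagonal (fun i => μ i * g i) * star U := by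
    rw [hB, hspec, key]
  have hBA : B * A = U * diagonal (fun i => g i * μ i) * star U := by
    rw [hB, hspec, key]
  have e1 : A * B * A = A := by
    rw [hAB, hspec, key, hμgμ, ← hspec]
  have e2 : B * A * B = B := by
    rw [hBA, hB, key]
    have : (fun i => g i * μ i * g i) = g := by
      funext i
      by_cases h : μ i = 0
      · simp [hg, h]
      · simp only [hg, h, if_false]; field_simp
    rw [this]
  have e3 : (A * B)ᵀ = A * B := by rw [hAB]; exact sym _
  have e4 : (B * A)ᵀ = B * A := by rw [hBA]; exact sym _
  have htr : (A * B).trace = (A.rank : ℝ) := by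
    rw [hAB]
    have h1 : (U * diagonal (fun i => μ i * g i) * star U).trace
        = (diagonal (fun i => μ i * g i)).trace := by
      rw [Matrix.trace_mul_cycle, hU2, Matrix.one_mul]
    rw [h1, Matrix.trace_diagonal]
    have hsum : ∑ i, μ i * g i = ∑ i, (if μ i = 0 then (0:ℝ) else 1) := by
      refine Finset.sum_congr rfl fun i _ => ?_
      by_cases h : μ i = 0
      · simp [hg, h]
      · simp only [hg, h, if_false]; field_simp
    rw [hsum, hA.rank_eq_card_non_zero_eigs]
    rw [Finset.sum_ite, Finset.sum_const, Finset.sum_const]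
    simp [Fintype.card_subtype]
    rfl
  exact ⟨B, ⟨e1, e2, e3, e4⟩, sym g, htr⟩

/-- quadratic form of a weighted Laplacian -/
lemma lap_quad {n : ℕ} (w : Fin n → Fin n → ℝ) (hs : ∀ i j, w i j = w j i)
    (hd : ∀ i, w i i = 0) (x : Fin n → ℝ) :
    x ⬝ᵥ ((Matrix.of fun i j => if i = j then (∑ k, w i k) else -w i j) *ᵥ x)
      = (∑ i, ∑ j, w i j * (x i - x j) ^ 2) / 2 := by
  have hM : ∀ i j, (Matrix.of fun i j => if i = j then (∑ k, w i k) else -w i j) i j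
      = (if i = j then (∑ k, w i k) else 0) - w i j := by
    intro i j; by_cases h : i = j <;> simp [h, hd]
  have hinner : ∀ i, ((Matrix.of fun i j => if i = j then (∑ k, w i k) else -w i j) *ᵥ x) i
      = (∑ k, w i k) * x i - ∑ j, w i j * x j := by
    intro i
    simp only [Matrix.mulVec, dotProduct, hM, sub_mul, Finset.sum_sub_distrib,
      ite_mul, zero_mul, Finset.sum_ite_eq, Finset.mem_univ, if_true]
  have hL : x ⬝ᵥ ((Matrix.of fun i j => if i = j then (∑ k, w i k) else -w i j) *ᵥ x)
      = ∑ i, ((∑ j, w i j * x i ^ 2) - ∑ j, w i j * (x i * x j)) := by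
    simp only [dotProduct, hinner]
    refine Finset.sum_congr rfl fun i _ => ?_
    have e1 : ∑ j, w i j * (x i * x j) = x i * ∑ j, w i j * x j := by
      rw [Finset.mul_sum]; exact Finset.sum_congr rfl fun j _ => by ring
    have e2 : ∑ j, w i j * x i ^ 2 = (∑ j, w i j) * x i ^ 2 := by
      rw [Finset.sum_mul]
    rw [e1, e2]
    ring
  rw [hL]
  have hswap : ∑ i, ∑ j, w i j * x j ^ 2 = ∑ i, ∑ j, w i j * x i ^ 2 := by
    rw [Finset.sum_comm]
    exact Finset.sum_congr rfl fun i _ => Finset.sum_congr rfl fun j _ => by rw [hs]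
  have hexp : ∑ i, ∑ j, w i j * (x i - x j) ^ 2
      = (∑ i, ∑ j, w i j * x i ^ 2) + (∑ i, ∑ j, w i j * x j ^ 2)
        - 2 * ∑ i, ∑ j, w i j * (x i * x j) := by
    simp only [← Finset.sum_add_distrib, ← Finset.sum_sub_distrib, Finset.mul_sum]
    refine Finset.sum_congr rfl fun i _ => Finset.sum_congr rfl fun j _ => by ring
  rw [Finset.sum_sub_distrib] at *
  rw [hexp, hswap]
  ring

end StmtAux

section GraphAux
open StmtAux
variable {n : ℕ} (Γ : SignedGraph n)

lemma quad_plus (x : Fin n → ℝ) :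
    x ⬝ᵥ (Γ.Lplus *ᵥ x) = (∑ i, ∑ j, Γ.wplus i j * (x i - x j) ^ 2) / 2 :=
  lap_quad Γ.wplus Γ.wplus_symm Γ.wplus_diag x

lemma quad_minus (x : Fin n → ℝ) :
    x ⬝ᵥ (Γ.Lminus *ᵥ x) = (∑ i, ∑ j, Γ.wminus i j * (x i - x j) ^ 2) / 2 :=
  lap_quad Γ.wminus Γ.wminus_symm Γ.wminus_diag x

lemma quad_plus_nonneg (x : Fin n → ℝ) : 0 ≤ x ⬝ᵥ (Γ.Lplus *ᵥ x) := by
  rw [quad_plus]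
  apply div_nonneg _ (by norm_num)
  refine Finset.sum_nonneg fun i _ => Finset.sum_nonneg fun j _ => ?_
  exact mul_nonneg (Γ.wplus_nonneg i j) (sq_nonneg _)

lemma quad_minus_nonneg (x : Fin n → ℝ) : 0 ≤ x ⬝ᵥ (Γ.Lminus *ᵥ x) := by
  rw [quad_minus]
  apply div_nonneg _ (by norm_num)
  refine Finset.sum_nonneg fun i _ => Finset.sum_nonneg fun j _ => ?_
  exact mul_nonneg (Γ.wminus_nonneg i j) (sq_nonneg _)

lemma quad_eps (ε : ℝ) (x : Fin n → ℝ) :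
    x ⬝ᵥ (Γ.Leps ε *ᵥ x) = x ⬝ᵥ (Γ.Lplus *ᵥ x) - ε * (x ⬝ᵥ (Γ.Lminus *ᵥ x)) := by
  rw [SignedGraph.Leps, Matrix.sub_mulVec, dotProduct_sub]
  congr 1
  rw [Matrix.smul_mulVec, dotProduct_smul, smul_eq_mul]

lemma Leps_isHermitian (ε : ℝ) : (Γ.Leps ε).IsHermitian := by
  rw [Matrix.IsHermitian]
  ext i j
  simp only [Matrix.conjTranspose_apply, SignedGraph.Leps, Matrix.sub_apply, Matrix.smul_apply,
    SignedGraph.Lplus, SignedGraph.Lminus, Matrix.of_apply, smul_eq_mul, star_trivial]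
  by_cases h : i = j
  · subst h; rfl
  · have h' : ¬ j = i := fun hh => h hh.symm
    simp [h, h', Γ.wplus_symm j i, Γ.wminus_symm j i]

lemma Leps_posSemidef {ε ε' : ℝ} (hε0 : 0 ≤ ε) (hle : ε ≤ ε')
    (h' : (Γ.Leps ε').PosSemidef) : (Γ.Leps ε).PosSemidef := by
  refine posSemidef_iff_dotProduct_mulVec.mpr ⟨Leps_isHermitian Γ ε, fun x => ?_⟩
  have hsx : star x = x := by funext i; simp
  rw [hsx, quad_eps]
  have h1 := (posSemidef_iff_dotProduct_mulVec.mp h').2 x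
  rw [hsx, quad_eps] at h1
  have h2 := quad_minus_nonneg Γ x
  nlinarith [mul_le_mul_of_nonneg_right hle h2]

lemma Leps_mulVec_const (ε : ℝ) (c : ℝ) : Γ.Leps ε *ᵥ (fun _ => c) = 0 := by
  funext i
  simp only [SignedGraph.Leps, Matrix.sub_mulVec, Matrix.smul_mulVec, Pi.sub_apply,
    Pi.smul_apply, smul_eq_mul, Pi.zero_apply]
  have key : ∀ (w : Fin n → Fin n → ℝ), (∀ k, w k k = 0) →
      ((Matrix.of fun i j => if i = j then (∑ k, w i k) else -w i j) *ᵥ (fun _ => c)) i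
        = 0 := by
    intro w hd
    have hM : ∀ j, (Matrix.of fun i j => if i = j then (∑ k, w i k) else -w i j) i j
        = (if i = j then (∑ k, w i k) else 0) - w i j := by
      intro j; by_cases h : i = j <;> simp [h, hd]
    simp only [Matrix.mulVec, dotProduct, hM, sub_mul, Finset.sum_sub_distrib,
      ite_mul, zero_mul, Finset.sum_ite_eq, Finset.mem_univ, if_true]
    rw [Finset.sum_mul]
    ring
  have e1 : Γ.Lplus = Matrix.of (fun i j => if i = j then (∑ k, Γ.wplus i k) else -Γ.wplus i j) := rfl
  have e2 : Γ.Lminus = Matrix.of (fun i j => if i = j then (∑ k, Γ.wminus i k) else -Γ.wminus i j) := rfl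
  rw [e1, e2, key Γ.wplus Γ.wplus_diag, key Γ.wminus Γ.wminus_diag]
  ring

lemma const_of_quad_plus_zero (hpc : Γ.PosConnected) {x : Fin n → ℝ}
    (hq : x ⬝ᵥ (Γ.Lplus *ᵥ x) = 0) : ∀ i j, x i = x j := by
  rw [quad_plus] at hq
  have hterm : ∀ i j, Γ.wplus i j * (x i - x j) ^ 2 = 0 := by
    have h0 : ∑ i, ∑ j, Γ.wplus i j * (x i - x j) ^ 2 = 0 := by linarith
    intro i j
    have h1 := (Finset.sum_eq_zero_iff_of_nonneg (fun i _ =>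
      Finset.sum_nonneg fun j _ => mul_nonneg (Γ.wplus_nonneg i j) (sq_nonneg _))).mp h0
    have h2 := (Finset.sum_eq_zero_iff_of_nonneg (fun j _ =>
      mul_nonneg (Γ.wplus_nonneg i j) (sq_nonneg _))).mp (h1 i (Finset.mem_univ i))
    exact h2 j (Finset.mem_univ j)
  have hadj : ∀ i j, Γ.posGraph.Adj i j → x i = x j := by
    intro i j hij
    rw [SignedGraph.posGraph, SimpleGraph.fromRel_adj] at hij
    obtain ⟨-, h | h⟩ := hij
    · have := hterm i j
      have hw : Γ.wplus i j ≠ 0 := ne_of_gt h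
      have : (x i - x j) ^ 2 = 0 := by
        rcases mul_eq_zero.mp this with h' | h'
        · exact absurd h' hw
        · exact h'
      have := pow_eq_zero_iff (n := 2) (by norm_num) |>.mp this
      linarith [sub_eq_zero.mp this]
    · have := hterm j i
      have hw : Γ.wplus j i ≠ 0 := ne_of_gt h
      have : (x j - x i) ^ 2 = 0 := by
        rcases mul_eq_zero.mp this with h' | h'
        · exact absurd h' hw
        · exact h'
      have := pow_eq_zero_iff (n := 2) (by norm_num) |>.mp this
      linarith [sub_eq_zero.mp this]
  intro i j
  obtain ⟨p⟩ := hpc.preconnected i j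
  induction p with
  | nil => rfl
  | cons h p ih => exact (hadj _ _ h).trans ih

end GraphAux

/-- ∑_{i,j} (w_ij⁺ − ε w_ij⁻) Ω_ε(i,j) = 2(|V|−1). -/
theorem stmt14 {n : ℕ} (Γ : SignedGraph n) (hpc : Γ.PosConnected)
    (ε : ℝ) (hε0 : 0 < ε) (hε : ε < Γ.consensusIndex) :
    ∑ i : Fin n, ∑ j : Fin n, (Γ.wplus i j - ε * Γ.wminus i j) * Γ.cost ε i j
      = 2 * ((n : ℝ) - 1) := by
  classical
  -- unpack the consensus index hypothesis
  set S : Set ℝ := {ε : ℝ | 0 < ε ∧ (Γ.Leps ε).PosSemidef ∧ (Γ.Leps ε).rank = n - 1} with hS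
  have hSne : S.Nonempty := by
    by_contra h
    rw [Set.not_nonempty_iff_eq_empty] at h
    rw [SignedGraph.consensusIndex, ← hS, h, Real.sSup_empty] at hε
    linarith
  have hbdd : BddAbove S := by
    by_contra h
    rw [SignedGraph.consensusIndex, ← hS, Real.sSup_of_not_bddAbove h] at hε
    linarith
  have hε' : ∃ ε' ∈ S, ε < ε' := by
    apply exists_lt_of_lt_csSup hSne
    rw [SignedGraph.consensusIndex] at hε
    exact hε
  obtain ⟨ε', hε'S, hlt⟩ := hε'
  have hpsd' : (Γ.Leps ε').PosSemidef := hε'S.2.1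
  have hpsd : (Γ.Leps ε).PosSemidef := Leps_posSemidef Γ hε0.le hlt.le hpsd'
  have hne : Nonempty (Fin n) := hpc.nonempty
  have hn1 : 1 ≤ n := Nat.one_le_iff_ne_zero.mpr (by
    rintro rfl
    exact (IsEmpty.false (α := Fin 0) hne.some))
  -- kernel characterization
  have hker_const : ∀ c : ℝ, Γ.Leps ε *ᵥ (fun _ => c) = 0 := Leps_mulVec_const Γ ε
  have hconst : ∀ x : Fin n → ℝ, Γ.Leps ε *ᵥ x = 0 → ∀ i j, x i = x j := by
    intro x hx
    have hq : x ⬝ᵥ (Γ.Leps ε *ᵥ x) = 0 := by rw [hx]; simp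
    rw [quad_eps] at hq
    have h1 := (posSemidef_iff_dotProduct_mulVec.mp hpsd').2 x
    have hsx : star x = x := by funext i; simp
    rw [hsx, quad_eps] at h1
    have h2 := quad_minus_nonneg Γ x
    have hqm : x ⬝ᵥ (Γ.Lminus *ᵥ x) = 0 := by nlinarith
    have hqp : x ⬝ᵥ (Γ.Lplus *ᵥ x) = 0 := by nlinarith
    exact const_of_quad_plus_zero Γ hpc hqp
  -- rank of Leps ε
  have hrank : (Γ.Leps ε).rank = n - 1 := by
    have hkereq : LinearMap.ker (Γ.Leps ε).mulVecLin
        = Submodule.span ℝ {(fun _ => (1:ℝ) : Fin n → ℝ)} := by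
      ext x
      rw [LinearMap.mem_ker, Submodule.mem_span_singleton]
      constructor
      · intro hx
        rw [Matrix.mulVecLin_apply] at hx
        refine ⟨x hne.some, funext fun j => ?_⟩
        show x hne.some • (1:ℝ) = x j
        rw [smul_eq_mul, mul_one]
        exact hconst x hx hne.some j
      · rintro ⟨a, rfl⟩
        rw [Matrix.mulVecLin_apply]
        have : (a • (fun _ => (1:ℝ)) : Fin n → ℝ) = (fun _ => a) := by funext j; simp
        rw [this]
        exact hker_const a
    have hrn := LinearMap.finrank_range_add_finrank_ker (Γ.Leps ε).mulVecLin
    have hone : (fun _ => (1:ℝ) : Fin n → ℝ) ≠ 0 := by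
      intro h
      have := congrFun h hne.some
      simp at this
    rw [hkereq, finrank_span_singleton hone] at hrn
    have hdim : Module.finrank ℝ (Fin n → ℝ) = n := by
      simp [Module.finrank_fintype_fun_eq_card]
    rw [hdim] at hrn
    rw [Matrix.rank]
    omega
  -- pseudoinverse properties
  obtain ⟨B, hMP, hBsymT, htrB⟩ := StmtAux.herm_stuff hpsd.1
  have hpB : pinv (Γ.Leps ε) = B := StmtAux.pinv_eq hMP
  have hBsym : ∀ i j, B i j = B j i := by
    intro i j
    conv_rhs => rw [← hBsymT]
    rfl
  -- cost formula
  have hcost : ∀ i j, Γ.cost ε i j = B i i + B j j - B i j - B j i := by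
    intro i j
    rw [SignedGraph.cost, hpB]
    rw [Matrix.mulVec_sub]
    simp only [sub_dotProduct, dotProduct_sub, Matrix.mulVec_single,
      single_dotProduct, mul_one, MulOpposite.op_one, one_smul, Matrix.col_apply]
    ring
  -- entries of Leps
  set M : Fin n → Fin n → ℝ := fun i j => Γ.wplus i j - ε * Γ.wminus i j with hMdef
  have hMsym : ∀ i j, M i j = M j i := by
    intro i j; simp only [hMdef, Γ.wplus_symm i j, Γ.wminus_symm i j]
  have hMdiag : ∀ i, M i i = 0 := by
    intro i; simp [hMdef, Γ.wplus_diag, Γ.wminus_diag]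
  have hL : ∀ i j, (Γ.Leps ε) i j = (if i = j then (∑ k, M i k) else 0) - M i j := by
    intro i j
    simp only [SignedGraph.Leps, Matrix.sub_apply, Matrix.smul_apply, SignedGraph.Lplus,
      SignedGraph.Lminus, Matrix.of_apply, smul_eq_mul, SignedGraph.dplus, SignedGraph.dminus]
    by_cases h : i = j
    · subst h
      simp [hMdef, hMdiag, Finset.sum_sub_distrib, Finset.mul_sum, Γ.wplus_diag, Γ.wminus_diag]
    · simp [h, hMdef]; ring
  -- trace expansion
  have htrace_exp : (Γ.Leps ε * B).trace
      = ∑ i, (∑ k, M i k) * B i i - ∑ i, ∑ j, M i j * B j i := by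
    rw [Matrix.trace]
    simp only [Matrix.diag_apply, Matrix.mul_apply, hL, sub_mul, Finset.sum_sub_distrib,
      ite_mul, zero_mul, Finset.sum_ite_eq, Finset.mem_univ, if_true]
  -- the final computation
  have hgoal : ∑ i, ∑ j, M i j * Γ.cost ε i j = 2 * (Γ.Leps ε * B).trace := by
    rw [htrace_exp]
    have hrow : ∀ i, ∑ j, M i j * (B i i + B j j - B i j - B j i)
        = (∑ k, M i k) * B i i + ∑ j, M i j * B j j - 2 * ∑ j, M i j * B j i := by
      intro i
      rw [Finset.sum_mul, Finset.mul_sum]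
      rw [Finset.sum_congr rfl (fun j _ => by
        show M i j * (B i i + B j j - B i j - B j i)
          = M i j * B i i + M i j * B j j - 2 * (M i j * B j i)
        rw [hBsym i j]; ring)]
      simp only [Finset.sum_add_distrib, Finset.sum_sub_distrib, Finset.mul_sum]
    have hswap2 : ∑ i, ∑ j, M i j * B j j = ∑ i, (∑ k, M i k) * B i i := by
      rw [Finset.sum_comm]
      refine Finset.sum_congr rfl fun j _ => ?_
      rw [Finset.sum_mul]
      refine Finset.sum_congr rfl fun i _ => ?_
      rw [hMsym]
    calc ∑ i, ∑ j, M i j * Γ.cost ε i j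
        = ∑ i, ((∑ k, M i k) * B i i + ∑ j, M i j * B j j - 2 * ∑ j, M i j * B j i) := by
          refine Finset.sum_congr rfl fun i _ => ?_
          rw [← hrow]
          exact Finset.sum_congr rfl fun j _ => by rw [hcost]
      _ = ∑ i, (∑ k, M i k) * B i i + ∑ i, ∑ j, M i j * B j j
            - 2 * ∑ i, ∑ j, M i j * B j i := by
          simp only [Finset.sum_add_distrib, Finset.sum_sub_distrib, Finset.mul_sum]
      _ = 2 * (∑ i, (∑ k, M i k) * B i i - ∑ i, ∑ j, M i j * B j i) := by
          rw [hswap2]; ring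
  have : ∑ i : Fin n, ∑ j : Fin n, (Γ.wplus i j - ε * Γ.wminus i j) * Γ.cost ε i j
      = ∑ i, ∑ j, M i j * Γ.cost ε i j := rfl
  rw [this, hgoal, htrB, hrank]
  have : ((n - 1 : ℕ) : ℝ) = (n : ℝ) - 1 := by
    push_cast [Nat.cast_sub hn1]
    ring
  rw [this]
end
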